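/- Let N⁺(n₁,n₂,r,s) denote the number of pairs (u,v) ∈ Δ⁺_{n₁,r} × Δ⁺_{n₂,r} with D(u,v) = s, and let F⁺ be the formal power series F⁺(x,y,z) = Σ_{n₁,n₂,r,s ≥ 0} N⁺(n₁,n₂,r,s)·x^{n₁+n₂} y^{r} z^{s} in the ring of formal power series in three variables over ℚ. Then [(1−x²)(1−xz) − y·x²·(1+xz)]·F⁺ = (1−x²)(1−xz). -/

import Mathlib

/-- `posSimplexPairCount n₁ n₂ r s` is the number of pairs
`(u,v) ∈ Δ⁺_{n₁,r} × Δ⁺_{n₂,r}` (positive simplices) with L1-distance `D(u,v) = s`. -/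
noncomputable def posSimplexPairCount (n₁ n₂ r s : ℕ) : ℕ :=
  Nat.card {p : (Fin r → ℤ) × (Fin r → ℤ) //
    (∀ i, 1 ≤ p.1 i) ∧ (∑ i, p.1 i) = (n₁ : ℤ) ∧
    (∀ i, 1 ≤ p.2 i) ∧ (∑ i, p.2 i) = (n₂ : ℤ) ∧
    (∑ i, |p.1 i - p.2 i|) = (s : ℤ)}

/-- The generating function `F⁺(x,y,z) = Σ N⁺(n₁,n₂,r,s) x^{n₁+n₂} y^r z^s` as a formal
power series in three variables over `ℚ` (variable `0` is `x`, `1` is `y`, `2` is `z`):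
the coefficient of `x^a y^r z^s` is `Σ_{n₁+n₂=a} N⁺(n₁,n₂,r,s)`. -/
noncomputable def FposSimplex : MvPowerSeries (Fin 3) ℚ :=
  fun d => ∑ pq ∈ Finset.HasAntidiagonal.antidiagonal (d 0),
    (posSimplexPairCount pq.1 pq.2 (d 1) (d 2) : ℚ)

local notation "Xv" => (MvPowerSeries.X 0 : MvPowerSeries (Fin 3) ℚ)
local notation "Yv" => (MvPowerSeries.X 1 : MvPowerSeries (Fin 3) ℚ)
local notation "Zv" => (MvPowerSeries.X 2 : MvPowerSeries (Fin 3) ℚ)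

section AuxSimplexGF

open Finset MvPowerSeries

/-- The set of pairs of positive integer vectors with prescribed sums and L1-distance. -/
def SS (n₁ n₂ : ℤ) (r : ℕ) (s : ℤ) : Set ((Fin r → ℤ) × (Fin r → ℤ)) :=
  {p | (∀ i, 1 ≤ p.1 i) ∧ (∑ i, p.1 i) = n₁ ∧
    (∀ i, 1 ≤ p.2 i) ∧ (∑ i, p.2 i) = n₂ ∧
    (∑ i, |p.1 i - p.2 i|) = s}

lemma SS_finite (n₁ n₂ : ℤ) (r : ℕ) (s : ℤ) : (SS n₁ n₂ r s).Finite := by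
  have hsub : SS n₁ n₂ r s ⊆
      (Set.pi Set.univ fun _ : Fin r => Set.Icc (1:ℤ) n₁) ×ˢ
      (Set.pi Set.univ fun _ : Fin r => Set.Icc (1:ℤ) n₂) := by
    rintro ⟨f, g⟩ ⟨h1, h2, h3, h4, _⟩
    constructor
    · intro i _
      refine ⟨h1 i, ?_⟩
      rw [← h2]
      exact Finset.single_le_sum (fun j _ => le_trans zero_le_one (h1 j)) (mem_univ i)
    · intro i _
      refine ⟨h3 i, ?_⟩
      rw [← h4]
      exact Finset.single_le_sum (fun j _ => le_trans zero_le_one (h3 j)) (mem_univ i)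
  exact Set.Finite.subset
    (Set.Finite.prod (Set.Finite.pi fun _ => Set.finite_Icc _ _)
      (Set.Finite.pi fun _ => Set.finite_Icc _ _)) hsub

lemma SS_empty_of_neg (n₁ n₂ : ℤ) (r : ℕ) {s : ℤ} (hs : s < 0) : SS n₁ n₂ r s = ∅ := by
  ext ⟨f, g⟩
  simp only [SS, Set.mem_setOf_eq, Set.mem_empty_iff_false, iff_false]
  rintro ⟨-, -, -, -, h5⟩
  have : (0:ℤ) ≤ ∑ i, |f i - g i| := Finset.sum_nonneg fun i _ => abs_nonneg _
  omega

lemma card_SS_zero (n₁ n₂ : ℤ) (s : ℤ) :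
    Nat.card (SS n₁ n₂ 0 s) = if n₁ = 0 ∧ n₂ = 0 ∧ s = 0 then 1 else 0 := by
  have h : SS n₁ n₂ 0 s = if n₁ = 0 ∧ n₂ = 0 ∧ s = 0 then Set.univ else ∅ := by
    ext ⟨f, g⟩
    simp only [SS, Set.mem_setOf_eq]
    split_ifs with h
    · simp only [Set.mem_univ, iff_true]
      refine ⟨fun i => i.elim0, ?_, fun i => i.elim0, ?_, ?_⟩ <;> simp [h.1, h.2.1, h.2.2]
    · simp only [Set.mem_empty_iff_false, iff_false]
      rintro ⟨-, h2, -, h4, h5⟩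
      simp only [Finset.univ_eq_empty, Finset.sum_empty] at h2 h4 h5
      exact h ⟨h2.symm, h4.symm, h5.symm⟩
  rw [h]
  split_ifs
  · simp
  · simp

lemma card_SS_succ (n₁ n₂ : ℤ) (r : ℕ) (s : ℤ) :
    Nat.card (SS n₁ n₂ (r+1) s) =
      ∑ uv ∈ Icc (1:ℤ) n₁ ×ˢ Icc (1:ℤ) n₂,
        Nat.card (SS (n₁ - uv.1) (n₂ - uv.2) r (s - |uv.1 - uv.2|)) := by
  classical
  have hfin := SS_finite n₁ n₂ (r+1) s
  rw [Nat.card_coe_set_eq, Set.ncard_eq_toFinset_card _ hfin]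
  rw [Finset.card_eq_sum_card_fiberwise
    (f := fun p => (p.1 (Fin.last r), p.2 (Fin.last r)))
    (t := Icc (1:ℤ) n₁ ×ˢ Icc (1:ℤ) n₂) ?memt]
  case memt =>
    rintro ⟨f, g⟩ hp
    rw [Finset.mem_coe, Set.Finite.mem_toFinset] at hp
    obtain ⟨h1, h2, h3, h4, -⟩ := hp
    simp only [Finset.mem_coe, Finset.mem_product, Finset.mem_Icc]
    refine ⟨⟨h1 _, ?_⟩, ⟨h3 _, ?_⟩⟩
    · rw [← h2]
      exact Finset.single_le_sum (fun j _ => le_trans zero_le_one (h1 j)) (mem_univ _)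
    · rw [← h4]
      exact Finset.single_le_sum (fun j _ => le_trans zero_le_one (h3 j)) (mem_univ _)
  refine Finset.sum_congr rfl ?_
  rintro ⟨u, v⟩ huv
  have hfin' := SS_finite (n₁ - u) (n₂ - v) r (s - |u - v|)
  rw [Nat.card_coe_set_eq, Set.ncard_eq_toFinset_card _ hfin']
  refine Finset.card_nbij' (fun p => (Fin.init p.1, Fin.init p.2))
    (fun q => (Fin.snoc q.1 u, Fin.snoc q.2 v)) ?_ ?_ ?_ ?_
  · rintro ⟨f, g⟩ hp
    rw [Finset.mem_coe, Finset.mem_filter, Set.Finite.mem_toFinset] at hp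
    obtain ⟨⟨h1, h2, h3, h4, h5⟩, heq⟩ := hp
    dsimp only at h1 h2 h3 h4 h5 heq
    have hu : f (Fin.last r) = u := by simpa using congrArg Prod.fst heq
    have hv : g (Fin.last r) = v := by simpa using congrArg Prod.snd heq
    rw [Finset.mem_coe, Set.Finite.mem_toFinset]
    refine ⟨fun i => h1 _, ?_, fun i => h3 _, ?_, ?_⟩
    · show ∑ i : Fin r, f (Fin.castSucc i) = n₁ - u
      rw [Fin.sum_univ_castSucc, hu] at h2
      omega
    · show ∑ i : Fin r, g (Fin.castSucc i) = n₂ - v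
      rw [Fin.sum_univ_castSucc, hv] at h4
      omega
    · show ∑ i : Fin r, |f (Fin.castSucc i) - g (Fin.castSucc i)| = s - |u - v|
      rw [Fin.sum_univ_castSucc (f := fun i => |f i - g i|)] at h5
      simp only [hu, hv] at h5
      omega
  · rintro ⟨f, g⟩ hq
    rw [Finset.mem_coe, Set.Finite.mem_toFinset] at hq
    obtain ⟨h1, h2, h3, h4, h5⟩ := hq
    simp only [Finset.mem_product, Finset.mem_Icc] at huv
    rw [Finset.mem_coe, Finset.mem_filter, Set.Finite.mem_toFinset]
    refine ⟨⟨?_, ?_, ?_, ?_, ?_⟩, ?_⟩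
    · intro i
      induction i using Fin.lastCases with
      | last => simpa using huv.1.1
      | cast i => simpa using h1 i
    · rw [Fin.sum_univ_castSucc]
      simp only [Fin.snoc_castSucc, Fin.snoc_last, h2]
      ring
    · intro i
      induction i using Fin.lastCases with
      | last => simpa using huv.2.1
      | cast i => simpa using h3 i
    · rw [Fin.sum_univ_castSucc]
      simp only [Fin.snoc_castSucc, Fin.snoc_last, h4]
      ring
    · rw [Fin.sum_univ_castSucc]
      simp only [Fin.snoc_castSucc, Fin.snoc_last, h5]
      ring
    · simp
  · rintro ⟨f, g⟩ hp
    simp only [Finset.mem_coe, Finset.mem_filter] at hp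
    have hu : f (Fin.last r) = u := by simpa using congrArg Prod.fst hp.2
    have hv : g (Fin.last r) = v := by simpa using congrArg Prod.snd hp.2
    dsimp only
    rw [← hu, ← hv]
    exact Prod.ext (Fin.snoc_init_self f) (Fin.snoc_init_self g)
  · rintro ⟨f, g⟩ _
    dsimp only
    rw [Fin.init_snoc, Fin.init_snoc]

noncomputable def cntZ (n₁ n₂ : ℤ) (r : ℕ) (s : ℤ) : ℕ := Nat.card (SS n₁ n₂ r s)

/-- `dd u v = |u - v|` for naturals. -/
def dd (u v : ℕ) : ℕ := (u - v) + (v - u)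

lemma abs_sub_cast (u v : ℕ) : |(u:ℤ) - v| = (dd u v : ℤ) := by
  rcases le_total u v with h | h <;> unfold dd <;>
    [rw [abs_of_nonpos (by push_cast; omega)]; rw [abs_of_nonneg (by push_cast; omega)]] <;>
    push_cast <;> omega

lemma cntZ_neg (n₁ n₂ : ℤ) (r : ℕ) {s : ℤ} (hs : s < 0) : cntZ n₁ n₂ r s = 0 := by
  rw [cntZ, SS_empty_of_neg _ _ _ hs]
  simp

noncomputable def cnt (n₁ n₂ r s : ℕ) : ℕ := cntZ n₁ n₂ r s

lemma cnt_zero (n₁ n₂ s : ℕ) : cnt n₁ n₂ 0 s = if n₁ = 0 ∧ n₂ = 0 ∧ s = 0 then 1 else 0 := by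
  rw [cnt, cntZ, card_SS_zero]
  congr 1
  simp [Nat.cast_eq_zero]

lemma cnt_succ (n₁ n₂ r s : ℕ) :
    cnt n₁ n₂ (r+1) s = ∑ u ∈ Icc 1 n₁, ∑ v ∈ Icc 1 n₂,
      (if dd u v ≤ s then cnt (n₁ - u) (n₂ - v) r (s - dd u v) else 0) := by
  rw [cnt, cntZ, card_SS_succ, ← Finset.sum_product']
  refine Finset.sum_nbij' (fun p => (p.1.toNat, p.2.toNat)) (fun q => ((q.1 : ℤ), (q.2 : ℤ)))
    ?_ ?_ ?_ ?_ ?_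
  · rintro ⟨x, y⟩ hx
    simp only [Finset.mem_product, Finset.mem_Icc] at hx ⊢
    omega
  · rintro ⟨x, y⟩ hx
    simp only [Finset.mem_product, Finset.mem_Icc] at hx ⊢
    omega
  · rintro ⟨x, y⟩ hx
    simp only [Finset.mem_product, Finset.mem_Icc] at hx
    simp only [Prod.mk.injEq]
    omega
  · rintro ⟨x, y⟩ hx
    simp only [Finset.mem_product, Finset.mem_Icc] at hx
    simp only [Prod.mk.injEq]
    omega
  · rintro ⟨x, y⟩ hx
    simp only [Finset.mem_product, Finset.mem_Icc] at hx
    obtain ⟨⟨hx1, hx2⟩, hy1, hy2⟩ := hx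
    obtain ⟨u, rfl⟩ : ∃ u : ℕ, (u:ℤ) = x := ⟨x.toNat, by omega⟩
    obtain ⟨v, rfl⟩ : ∃ v : ℕ, (v:ℤ) = y := ⟨y.toNat, by omega⟩
    dsimp only
    rw [abs_sub_cast, Int.toNat_natCast, Int.toNat_natCast]
    have hu : u ≤ n₁ := by exact_mod_cast hx2
    have hv : v ≤ n₂ := by exact_mod_cast hy2
    split_ifs with h
    · have e1 : (n₁:ℤ) - u = ((n₁ - u : ℕ) : ℤ) := by push_cast; omega
      have e2 : (n₂:ℤ) - v = ((n₂ - v : ℕ) : ℤ) := by push_cast; omega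
      have e3 : (s:ℤ) - (dd u v : ℕ) = ((s - dd u v : ℕ) : ℤ) := by push_cast; omega
      rw [e1, e2, e3]
      rfl
    · rw [SS_empty_of_neg _ _ _ (by push_cast at h ⊢; omega)]
      simp

lemma cnt_one (u v s : ℕ) :
    cnt u v 1 s = if 1 ≤ u ∧ 1 ≤ v ∧ dd u v = s then 1 else 0 := by
  rw [cnt_succ]
  rcases Nat.eq_zero_or_pos u with hu | hu
  · subst hu
    simp [Finset.Icc_eq_empty_of_lt]
  rcases Nat.eq_zero_or_pos v with hv | hv
  · subst hv
    simp [Finset.Icc_eq_empty_of_lt]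
  rw [Finset.sum_eq_single_of_mem u (Finset.mem_Icc.mpr ⟨hu, le_refl u⟩)]
  · rw [Finset.sum_eq_single_of_mem v (Finset.mem_Icc.mpr ⟨hv, le_refl v⟩)]
    · simp only [cnt_zero]
      split_ifs <;> omega
    · intro b hb hbv
      rw [Finset.mem_Icc] at hb
      simp only [cnt_zero]
      split_ifs <;> omega
  · intro b hb hbu
    rw [Finset.mem_Icc] at hb
    apply Finset.sum_eq_zero
    intro c hc
    rw [Finset.mem_Icc] at hc
    simp only [cnt_zero]
    split_ifs <;> omega

noncomputable def ccnt (a r s : ℕ) : ℕ := ∑ p ∈ antidiagonal a, cnt p.1 p.2 r s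

def wt (b t : ℕ) : ℕ := if b % 2 = t % 2 ∧ t + 2 ≤ b then (if t = 0 then 1 else 2) else 0

lemma ccnt_zero (a s : ℕ) : ccnt a 0 s = if a = 0 ∧ s = 0 then 1 else 0 := by
  rw [ccnt]
  rcases Nat.eq_zero_or_pos a with ha | ha
  · subst ha
    rw [Finset.Nat.antidiagonal_zero, Finset.sum_singleton, cnt_zero]
    simp
  · rw [Finset.sum_eq_zero, if_neg (by omega)]
    rintro ⟨p1, p2⟩ hp
    rw [Finset.HasAntidiagonal.mem_antidiagonal] at hp
    rw [cnt_zero]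
    simp only at *
    split_ifs <;> omega

lemma ccnt_one (b t : ℕ) : ccnt b 1 t = wt b t := by
  rw [ccnt, Finset.Nat.sum_antidiagonal_eq_sum_range_succ_mk]
  simp only [cnt_one]
  rw [← Finset.card_filter]
  unfold wt
  split_ifs with h1 h2
  · rw [Finset.card_eq_one]
    refine ⟨b / 2, ?_⟩
    ext i
    rw [Finset.mem_filter]
    simp only [Finset.mem_filter, Finset.mem_range, Finset.mem_singleton, dd]
    omega
  · rw [Finset.card_eq_two]
    refine ⟨(b + t) / 2, (b - t) / 2, by omega, ?_⟩
    ext i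
    rw [Finset.mem_filter]
    simp only [Finset.mem_filter, Finset.mem_range, Finset.mem_insert, Finset.mem_singleton, dd]
    omega
  · rw [Finset.card_eq_zero, Finset.filter_eq_empty_iff]
    intro i hi
    rw [Finset.mem_range] at hi
    simp only [dd]
    omega

set_option maxHeartbeats 1000000 in
lemma wt_star (b t : ℕ) :
    wt b t + (if 3 ≤ b ∧ 1 ≤ t then wt (b-3) (t-1) else 0) =
      (if 2 ≤ b then wt (b-2) t else 0) + (if 1 ≤ b ∧ 1 ≤ t then wt (b-1) (t-1) else 0) +
      (if b = 2 ∧ t = 0 then 1 else 0) + (if b = 3 ∧ t = 1 then 1 else 0) := by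
  simp only [wt]
  split_ifs <;> omega

lemma sum_antidiagonal_one_le {M : Type*} [AddCommMonoid M] (n : ℕ) (G : ℕ → ℕ → M) :
    (∑ q ∈ antidiagonal n, if 1 ≤ q.1 then G q.1 q.2 else 0) = ∑ u ∈ Icc 1 n, G u (n - u) := by
  rw [Finset.Nat.sum_antidiagonal_eq_sum_range_succ_mk]
  have hr : range (n+1) = insert 0 (Icc 1 n) := by
    ext i
    simp only [Finset.mem_range, Finset.mem_insert, Finset.mem_Icc]
    omega
  rw [hr, Finset.sum_insert (by simp), if_neg (by omega), zero_add]
  refine Finset.sum_congr rfl fun u hu => ?_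
  rw [Finset.mem_Icc] at hu
  rw [if_pos hu.1]

lemma sum_antidiagonal_collapse {M : Type*} [AddCommMonoid M] (s t₀ : ℕ) (X : ℕ → M) :
    (∑ w ∈ antidiagonal s, if w.1 = t₀ then X w.2 else 0) = if t₀ ≤ s then X (s - t₀) else 0 := by
  rw [Finset.Nat.sum_antidiagonal_eq_sum_range_succ_mk]
  rw [Finset.sum_ite_eq' (range (s+1)) t₀ (fun i => X (s - i))]
  simp [Nat.lt_succ_iff]

lemma quad_swap {M : Type*} [AddCommMonoid M] (a : ℕ) (f : ℕ → ℕ → ℕ → ℕ → M) :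
    (∑ p ∈ antidiagonal a, ∑ q ∈ antidiagonal p.1, ∑ w ∈ antidiagonal p.2,
        f q.1 w.1 q.2 w.2)
      = ∑ p ∈ antidiagonal a, ∑ q ∈ antidiagonal p.1, ∑ w ∈ antidiagonal p.2,
        f q.1 q.2 w.1 w.2 := by
  have flat : ∀ g : ℕ × ℕ → ℕ × ℕ → M,
      (∑ p ∈ antidiagonal a, ∑ q ∈ antidiagonal p.1, ∑ w ∈ antidiagonal p.2, g q w)
      = ∑ y ∈ (antidiagonal a).sigma (fun p => antidiagonal p.1 ×ˢ antidiagonal p.2),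
          g y.2.1 y.2.2 := by
    intro g
    rw [Finset.sum_sigma]
    refine Finset.sum_congr rfl fun p _ => ?_
    rw [Finset.sum_product]
  rw [flat fun q w => f q.1 w.1 q.2 w.2, flat fun q w => f q.1 q.2 w.1 w.2]
  refine Finset.sum_nbij'
    (fun y => ⟨(y.2.1.1 + y.2.2.1, y.2.1.2 + y.2.2.2), ((y.2.1.1, y.2.2.1), (y.2.1.2, y.2.2.2))⟩)
    (fun y => ⟨(y.2.1.1 + y.2.2.1, y.2.1.2 + y.2.2.2), ((y.2.1.1, y.2.2.1), (y.2.1.2, y.2.2.2))⟩)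
    ?_ ?_ ?_ ?_ ?_
  · rintro ⟨⟨b, a'⟩, ⟨⟨x1, x2⟩, ⟨x3, x4⟩⟩⟩ hy
    simp only [Finset.mem_sigma, Finset.mem_product, Finset.HasAntidiagonal.mem_antidiagonal] at hy ⊢
    exact ⟨by omega, trivial, trivial⟩
  · rintro ⟨⟨b, a'⟩, ⟨⟨x1, x2⟩, ⟨x3, x4⟩⟩⟩ hy
    simp only [Finset.mem_sigma, Finset.mem_product, Finset.HasAntidiagonal.mem_antidiagonal] at hy ⊢
    exact ⟨by omega, trivial, trivial⟩
  · rintro ⟨⟨b, a'⟩, ⟨⟨x1, x2⟩, ⟨x3, x4⟩⟩⟩ hy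
    simp only [Finset.mem_sigma, Finset.mem_product, Finset.HasAntidiagonal.mem_antidiagonal] at hy
    obtain ⟨h1, h2, h3⟩ := hy
    subst h2 h3
    rfl
  · rintro ⟨⟨b, a'⟩, ⟨⟨x1, x2⟩, ⟨x3, x4⟩⟩⟩ hy
    simp only [Finset.mem_sigma, Finset.mem_product, Finset.HasAntidiagonal.mem_antidiagonal] at hy
    obtain ⟨h1, h2, h3⟩ := hy
    subst h2 h3
    rfl
  · rintro ⟨⟨b, a'⟩, ⟨⟨x1, x2⟩, ⟨x3, x4⟩⟩⟩ _
    rfl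

lemma ccnt_succ (a r s : ℕ) :
    ccnt a (r+1) s = ∑ p ∈ antidiagonal a, ∑ w ∈ antidiagonal s,
      wt p.1 w.1 * ccnt p.2 r w.2 := by
  set B : ℕ → ℕ → ℕ → ℕ → ℕ := fun u v m1 m2 =>
    if 1 ≤ u ∧ 1 ≤ v ∧ dd u v ≤ s then cnt m1 m2 r (s - dd u v) else 0 with hB
  have lhs1 : ccnt a (r+1) s = ∑ p ∈ antidiagonal a, ∑ q ∈ antidiagonal p.1,
      ∑ w ∈ antidiagonal p.2, B q.1 w.1 q.2 w.2 := by
    rw [ccnt]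
    refine Finset.sum_congr rfl fun p _ => ?_
    have step1 : ∀ q ∈ antidiagonal p.1,
        (∑ w ∈ antidiagonal p.2, B q.1 w.1 q.2 w.2)
          = if 1 ≤ q.1 then ∑ v ∈ Icc 1 p.2,
              (if dd q.1 v ≤ s then cnt q.2 (p.2 - v) r (s - dd q.1 v) else 0)
            else 0 := by
      intro q _
      by_cases hq : 1 ≤ q.1
      · rw [if_pos hq]
        refine Eq.trans ?_ (sum_antidiagonal_one_le p.2
          (fun v m2 => if dd q.1 v ≤ s then cnt q.2 m2 r (s - dd q.1 v) else 0))
        refine Finset.sum_congr rfl fun w _ => ?_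
        simp only [hB]
        split_ifs <;> first | rfl | omega
      · rw [if_neg hq]
        apply Finset.sum_eq_zero
        intro w _
        simp only [hB]
        rw [if_neg (by omega)]
    refine (Eq.trans (Finset.sum_congr rfl step1) ?_).symm
    refine Eq.trans (sum_antidiagonal_one_le p.1
      (fun u m1 => ∑ v ∈ Icc 1 p.2,
        (if dd u v ≤ s then cnt m1 (p.2 - v) r (s - dd u v) else 0))) ?_
    exact (cnt_succ p.1 p.2 r s).symm
  have rhs1 : (∑ p ∈ antidiagonal a, ∑ w ∈ antidiagonal s, wt p.1 w.1 * ccnt p.2 r w.2)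
      = ∑ p ∈ antidiagonal a, ∑ q ∈ antidiagonal p.1,
          ∑ w ∈ antidiagonal p.2, B q.1 q.2 w.1 w.2 := by
    refine Finset.sum_congr rfl fun p _ => ?_
    have e1 : ∀ w' : ℕ × ℕ, wt p.1 w'.1 * ccnt p.2 r w'.2
        = ∑ q ∈ antidiagonal p.1,
            if 1 ≤ q.1 ∧ 1 ≤ q.2 ∧ dd q.1 q.2 = w'.1 then ccnt p.2 r w'.2 else 0 := by
      intro w'
      rw [← ccnt_one, ccnt, Finset.sum_mul]
      refine Finset.sum_congr rfl fun q _ => ?_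
      rw [cnt_one, ite_mul, one_mul, zero_mul]
    simp only [e1]
    rw [Finset.sum_comm]
    refine Finset.sum_congr rfl fun q _ => ?_
    have e2 : (∑ w' ∈ antidiagonal s,
        if 1 ≤ q.1 ∧ 1 ≤ q.2 ∧ dd q.1 q.2 = w'.1 then ccnt p.2 r w'.2 else 0)
        = if 1 ≤ q.1 ∧ 1 ≤ q.2 ∧ dd q.1 q.2 ≤ s then ccnt p.2 r (s - dd q.1 q.2) else 0 := by
      by_cases hq : 1 ≤ q.1 ∧ 1 ≤ q.2
      · have hpt : ∀ w' : ℕ × ℕ, (if 1 ≤ q.1 ∧ 1 ≤ q.2 ∧ dd q.1 q.2 = w'.1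
            then ccnt p.2 r w'.2 else 0)
            = if w'.1 = dd q.1 q.2 then ccnt p.2 r w'.2 else 0 := by
          intro w'
          split_ifs <;> first | rfl | omega
        simp only [hpt]
        rw [sum_antidiagonal_collapse]
        split_ifs <;> first | rfl | omega
      · rw [if_neg (by tauto)]
        apply Finset.sum_eq_zero
        intro w' _
        rw [if_neg (by tauto)]
    rw [e2]
    by_cases hq : 1 ≤ q.1 ∧ 1 ≤ q.2 ∧ dd q.1 q.2 ≤ s
    · rw [if_pos hq, ccnt]
      refine Finset.sum_congr rfl fun w _ => ?_
      simp only [hB]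
      rw [if_pos hq]
    · rw [if_neg hq]
      refine (Finset.sum_eq_zero ?_).symm
      intro w _
      simp only [hB]
      rw [if_neg hq]
  rw [lhs1, rhs1]
  exact quad_swap a B

noncomputable section

def mk3 (i j k : ℕ) : Fin 3 →₀ ℕ :=
  Finsupp.single 0 i + Finsupp.single 1 j + Finsupp.single 2 k

@[simp] lemma mk3_apply0 (i j k : ℕ) : mk3 i j k 0 = i := by
  simp [mk3, Finsupp.single_apply]

@[simp] lemma mk3_apply1 (i j k : ℕ) : mk3 i j k 1 = j := by
  simp [mk3, Finsupp.single_apply]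

@[simp] lemma mk3_apply2 (i j k : ℕ) : mk3 i j k 2 = k := by
  simp [mk3, Finsupp.single_apply]

lemma eq_mk3_iff {d : Fin 3 →₀ ℕ} {i j k : ℕ} :
    d = mk3 i j k ↔ d 0 = i ∧ d 1 = j ∧ d 2 = k := by
  constructor
  · rintro rfl
    simp
  · rintro ⟨h0, h1, h2⟩
    ext x
    fin_cases x <;> simpa
lemma mk3_eta (d : Fin 3 →₀ ℕ) : mk3 (d 0) (d 1) (d 2) = d :=
  (eq_mk3_iff.mpr ⟨rfl, rfl, rfl⟩).symm

lemma mk3_add (a b c a' b' c' : ℕ) :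
    mk3 a b c + mk3 a' b' c' = mk3 (a + a') (b + b') (c + c') := by
  refine eq_mk3_iff.mpr ⟨?_, ?_, ?_⟩ <;> simp

lemma mk3_le_iff {i j k : ℕ} {d : Fin 3 →₀ ℕ} :
    mk3 i j k ≤ d ↔ i ≤ d 0 ∧ j ≤ d 1 ∧ k ≤ d 2 := by
  rw [Finsupp.le_def]
  constructor
  · intro h
    exact ⟨by simpa using h 0, by simpa using h 1, by simpa using h 2⟩
  · rintro ⟨h0, h1, h2⟩ x
    fin_cases x <;> simpa

@[simp] lemma sub_mk3_apply0 (d : Fin 3 →₀ ℕ) (i j k : ℕ) :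
    (d - mk3 i j k) 0 = d 0 - i := by rw [Finsupp.tsub_apply, mk3_apply0]
@[simp] lemma sub_mk3_apply1 (d : Fin 3 →₀ ℕ) (i j k : ℕ) :
    (d - mk3 i j k) 1 = d 1 - j := by rw [Finsupp.tsub_apply, mk3_apply1]
@[simp] lemma sub_mk3_apply2 (d : Fin 3 →₀ ℕ) (i j k : ℕ) :
    (d - mk3 i j k) 2 = d 2 - k := by rw [Finsupp.tsub_apply, mk3_apply2]

def M3 (i j k : ℕ) : MvPowerSeries (Fin 3) ℚ := monomial (mk3 i j k) 1

lemma M3_mul (a b c a' b' c' : ℕ) :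
    M3 a b c * M3 a' b' c' = M3 (a+a') (b+b') (c+c') := by
  rw [M3, M3, M3, monomial_mul_monomial, one_mul, mk3_add]

lemma one_eq_M3 : (1 : MvPowerSeries (Fin 3) ℚ) = M3 0 0 0 := by
  rw [M3, show mk3 0 0 0 = 0 from by refine (eq_mk3_iff.mpr ?_).symm <;> simp,
    monomial_zero_one]

lemma X0_eq : (X 0 : MvPowerSeries (Fin 3) ℚ) = M3 1 0 0 := by
  have h : Finsupp.single (0 : Fin 3) 1 = mk3 1 0 0 :=
    eq_mk3_iff.mpr (by simp [Finsupp.single_apply])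
  rw [X, h, M3]

lemma X1_eq : (X 1 : MvPowerSeries (Fin 3) ℚ) = M3 0 1 0 := by
  have h : Finsupp.single (1 : Fin 3) 1 = mk3 0 1 0 :=
    eq_mk3_iff.mpr (by simp [Finsupp.single_apply])
  rw [X, h, M3]

lemma X2_eq : (X 2 : MvPowerSeries (Fin 3) ℚ) = M3 0 0 1 := by
  have h : Finsupp.single (2 : Fin 3) 1 = mk3 0 0 1 :=
    eq_mk3_iff.mpr (by simp [Finsupp.single_apply])
  rw [X, h, M3]

lemma coeff_M3 (i j k : ℕ) (d : Fin 3 →₀ ℕ) :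
    coeff d (M3 i j k) = if d 0 = i ∧ d 1 = j ∧ d 2 = k then 1 else 0 := by
  rw [M3, coeff_monomial]
  by_cases h : d = mk3 i j k
  · rw [if_pos h, if_pos (eq_mk3_iff.mp h)]
  · rw [if_neg h, if_neg fun hc => h (eq_mk3_iff.mpr hc)]

lemma coeff_M3_mul (i j k : ℕ) (A : MvPowerSeries (Fin 3) ℚ) (d : Fin 3 →₀ ℕ) :
    coeff d (M3 i j k * A)
      = if i ≤ d 0 ∧ j ≤ d 1 ∧ k ≤ d 2 then A (d - mk3 i j k) else 0 := by
  rw [M3, coeff_monomial_mul]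
  by_cases h : mk3 i j k ≤ d
  · rw [if_pos h, if_pos (mk3_le_iff.mp h), one_mul, coeff_apply]
  · rw [if_neg h, if_neg fun hc => h (mk3_le_iff.mpr hc)]


lemma coeff3_mul (A B : MvPowerSeries (Fin 3) ℚ) (d : Fin 3 →₀ ℕ) :
    coeff d (A * B) = ∑ p ∈ antidiagonal (d 0), ∑ q ∈ antidiagonal (d 1),
      ∑ w ∈ antidiagonal (d 2), A (mk3 p.1 q.1 w.1) * B (mk3 p.2 q.2 w.2) := by
  classical
  rw [MvPowerSeries.coeff_mul]
  have flat : ∀ g : (ℕ×ℕ) → (ℕ×ℕ) → (ℕ×ℕ) → ℚ,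
      (∑ p ∈ antidiagonal (d 0), ∑ q ∈ antidiagonal (d 1), ∑ w ∈ antidiagonal (d 2), g p q w)
      = ∑ y ∈ antidiagonal (d 0) ×ˢ (antidiagonal (d 1) ×ˢ antidiagonal (d 2)),
          g y.1 y.2.1 y.2.2 := by
    intro g
    rw [Finset.sum_product]
    refine Finset.sum_congr rfl fun p _ => ?_
    rw [Finset.sum_product]
  rw [flat fun p q w => A (mk3 p.1 q.1 w.1) * B (mk3 p.2 q.2 w.2)]
  refine Finset.sum_nbij'
    (fun x => ((x.1 0, x.2 0), ((x.1 1, x.2 1), (x.1 2, x.2 2))))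
    (fun y => (mk3 y.1.1 y.2.1.1 y.2.2.1, mk3 y.1.2 y.2.1.2 y.2.2.2))
    ?_ ?_ ?_ ?_ ?_
  · rintro ⟨e, f⟩ hx
    rw [Finset.HasAntidiagonal.mem_antidiagonal] at hx
    subst hx
    simp [Finsupp.add_apply]
  · rintro ⟨⟨p1, p2⟩, ⟨⟨q1, q2⟩, ⟨w1, w2⟩⟩⟩ hy
    simp only [Finset.mem_product, Finset.HasAntidiagonal.mem_antidiagonal] at hy
    rw [Finset.HasAntidiagonal.mem_antidiagonal]
    dsimp only
    rw [mk3_add, hy.1, hy.2.1, hy.2.2]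
    exact mk3_eta d
  · rintro ⟨e, f⟩ hx
    dsimp only
    rw [mk3_eta, mk3_eta]
  · rintro ⟨⟨p1, p2⟩, ⟨⟨q1, q2⟩, ⟨w1, w2⟩⟩⟩ hy
    simp
  · rintro ⟨e, f⟩ hx
    dsimp only
    rw [mk3_eta, mk3_eta, coeff_apply, coeff_apply]

def Wser : MvPowerSeries (Fin 3) ℚ :=
  fun d => if d 1 = 0 then (wt (d 0) (d 2) : ℚ) else 0

def Cser (r : ℕ) : MvPowerSeries (Fin 3) ℚ :=
  fun d => if d 1 = r then (ccnt (d 0) r (d 2) : ℚ) else 0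

def DdenS : MvPowerSeries (Fin 3) ℚ :=
  (1 - (X 0 : MvPowerSeries (Fin 3) ℚ) ^ 2) * (1 - (X 0 : MvPowerSeries (Fin 3) ℚ) * X 2)

lemma X0_sq : (X 0 : MvPowerSeries (Fin 3) ℚ) ^ 2 = M3 2 0 0 := by
  rw [X0_eq, sq, M3_mul]

lemma X0X2 : (X 0 : MvPowerSeries (Fin 3) ℚ) * X 2 = M3 1 0 1 := by
  rw [X0_eq, X2_eq, M3_mul]

lemma DdenS_eq : DdenS = 1 - M3 2 0 0 - M3 1 0 1 + M3 3 0 1 := by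
  have h : M3 2 0 0 * M3 1 0 1 = M3 3 0 1 := M3_mul 2 0 0 1 0 1
  rw [DdenS, X0_sq, X0X2, ← h]
  ring

lemma castite (P : Prop) [Decidable P] (n : ℕ) :
    (if P then (n : ℚ) else 0) = ((if P then n else 0 : ℕ) : ℚ) := by
  split_ifs <;> simp

lemma key3 : DdenS * Wser = M3 2 0 0 + M3 3 0 1 := by
  apply MvPowerSeries.ext
  intro d
  rw [DdenS_eq, map_add, coeff_M3, coeff_M3]
  have expand : (1 - M3 2 0 0 - M3 1 0 1 + M3 3 0 1) * Wser
      = 1 * Wser - M3 2 0 0 * Wser - M3 1 0 1 * Wser + M3 3 0 1 * Wser := by ring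
  rw [expand, one_mul, map_add, map_sub, map_sub, coeff_M3_mul, coeff_M3_mul, coeff_M3_mul,
    coeff_apply]
  simp only [Wser, sub_mk3_apply0, sub_mk3_apply1, sub_mk3_apply2, Nat.zero_le, true_and,
    Nat.sub_zero]
  by_cases hr : d 1 = 0
  · simp only [hr, if_true, and_true, true_and]
    set b := d 0 with hb
    set t := d 2 with ht
    have hn := wt_star b t
    have h : ((wt b t : ℚ)) + (if 3 ≤ b ∧ 1 ≤ t then (wt (b-3) (t-1) : ℚ) else 0) =
        (if 2 ≤ b then (wt (b-2) t : ℚ) else 0)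
          + (if 1 ≤ b ∧ 1 ≤ t then (wt (b-1) (t-1) : ℚ) else 0)
          + (if b = 2 ∧ t = 0 then 1 else 0) + (if b = 3 ∧ t = 1 then 1 else 0) := by
      exact_mod_cast hn
    linarith [h]
  · simp [hr]


lemma Cser_zero : Cser 0 = 1 := by
  apply MvPowerSeries.ext
  intro d
  have hd : d = 0 ↔ d 0 = 0 ∧ d 1 = 0 ∧ d 2 = 0 := by
    constructor
    · rintro rfl
      simp
    · rintro ⟨h0, h1, h2⟩
      refine Finsupp.ext fun x => ?_
      fin_cases x <;> simpa
  rw [coeff_apply, MvPowerSeries.coeff_one, Cser]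
  by_cases h1 : d 1 = 0
  · rw [if_pos h1, ccnt_zero]
    by_cases h : d 0 = 0 ∧ d 2 = 0
    · rw [if_pos h, if_pos (hd.mpr ⟨h.1, h1, h.2⟩), Nat.cast_one]
    · rw [if_neg h, if_neg fun hc => h ⟨(hd.mp hc).1, (hd.mp hc).2.2⟩, Nat.cast_zero]
  · rw [if_neg h1, if_neg fun hc => h1 (hd.mp hc).2.1]

lemma Cser_succ (r : ℕ) : Cser (r+1) = X 1 * (Wser * Cser r) := by
  apply MvPowerSeries.ext
  intro d
  rw [coeff_apply, X1_eq, coeff_M3_mul]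
  by_cases h1 : 1 ≤ d 1
  · rw [if_pos ⟨Nat.zero_le _, h1, Nat.zero_le _⟩]
    have e0 : (d - mk3 0 1 0) 0 = d 0 := by simp
    have e1 : (d - mk3 0 1 0) 1 = d 1 - 1 := by simp
    have e2 : (d - mk3 0 1 0) 2 = d 2 := by simp
    rw [show (Wser * Cser r) (d - mk3 0 1 0) = coeff (d - mk3 0 1 0) (Wser * Cser r)
      from rfl]
    rw [coeff3_mul, e0, e1, e2]
    by_cases hr : d 1 = r + 1
    · have hjr : d 1 - 1 = r := by omega
      rw [hjr]
      have inner : ∀ p : ℕ × ℕ, (∑ q ∈ antidiagonal r, ∑ w ∈ antidiagonal (d 2),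
          Wser (mk3 p.1 q.1 w.1) * Cser r (mk3 p.2 q.2 w.2))
          = ∑ w ∈ antidiagonal (d 2), (wt p.1 w.1 : ℚ) * (ccnt p.2 r w.2 : ℚ) := by
        intro p
        rw [Finset.sum_eq_single (0, r)]
        · refine Finset.sum_congr rfl fun w _ => ?_
          simp [Wser, Cser]
        · rintro ⟨q1, q2⟩ hq hne
          rw [Finset.HasAntidiagonal.mem_antidiagonal] at hq
          apply Finset.sum_eq_zero
          intro w _
          simp only [Wser, Cser, mk3_apply0, mk3_apply1, mk3_apply2]
          by_cases hq1 : q1 = 0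
          · exfalso
            apply hne
            subst hq1
            rw [show q2 = r by omega]
          · rw [if_neg hq1, zero_mul]
        · intro hmem
          exfalso
          exact hmem (Finset.HasAntidiagonal.mem_antidiagonal.mpr (by omega))
      rw [Finset.sum_congr rfl fun p _ => inner p]
      rw [Cser, if_pos hr, ccnt_succ]
      push_cast
      rfl
    · rw [Cser, if_neg hr]
      symm
      apply Finset.sum_eq_zero
      intro p _
      apply Finset.sum_eq_zero
      rintro ⟨q1, q2⟩ hq
      rw [Finset.HasAntidiagonal.mem_antidiagonal] at hq
      apply Finset.sum_eq_zero
      intro w _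
      simp only [Wser, Cser, mk3_apply0, mk3_apply1, mk3_apply2]
      by_cases hq1 : q1 = 0
      · rw [if_neg (show ¬q2 = r by omega), mul_zero]
      · rw [if_neg hq1, zero_mul]
  · rw [if_neg (by tauto), Cser, if_neg (by omega)]

lemma slice_mul {A B : MvPowerSeries (Fin 3) ℚ} {j k : ℕ}
    (hA : ∀ e : Fin 3 →₀ ℕ, e 1 ≠ j → coeff e A = 0)
    (hB : ∀ e : Fin 3 →₀ ℕ, e 1 ≠ k → coeff e B = 0)
    (d : Fin 3 →₀ ℕ) (hd : d 1 ≠ j + k) : coeff d (A * B) = 0 := by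
  classical
  rw [MvPowerSeries.coeff_mul]
  apply Finset.sum_eq_zero
  rintro ⟨e, f⟩ hef
  rw [Finset.HasAntidiagonal.mem_antidiagonal] at hef
  have hsum : e 1 + f 1 = d 1 := by
    rw [← hef]; rfl
  by_cases he : e 1 = j
  · rw [hB f (by omega), mul_zero]
  · rw [hA e he, zero_mul]

lemma Cser_support (r : ℕ) (e : Fin 3 →₀ ℕ) (he : e 1 ≠ r) : coeff e (Cser r) = 0 := by
  rw [coeff_apply, Cser, if_neg he]

lemma DdenS_support (e : Fin 3 →₀ ℕ) (he : e 1 ≠ 0) : coeff e DdenS = 0 := by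
  rw [DdenS_eq, map_add, map_sub, map_sub, coeff_M3, coeff_M3, coeff_M3,
    MvPowerSeries.coeff_one]
  rw [if_neg (by intro hc; subst hc; simp at he), if_neg (by tauto), if_neg (by tauto),
    if_neg (by tauto)]
  ring

lemma coeff_mul_congr (Q U V : MvPowerSeries (Fin 3) ℚ) (d : Fin 3 →₀ ℕ)
    (h : ∀ e f : Fin 3 →₀ ℕ, e + f = d → coeff e Q ≠ 0 → U f = V f) :
    coeff d (Q * U) = coeff d (Q * V) := by
  classical
  rw [MvPowerSeries.coeff_mul, MvPowerSeries.coeff_mul]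
  refine Finset.sum_congr rfl ?_
  rintro ⟨e, f⟩ hef
  rw [Finset.HasAntidiagonal.mem_antidiagonal] at hef
  by_cases hq : coeff e Q = 0
  · rw [hq, zero_mul, zero_mul]
  · rw [show coeff f U = U f from rfl, show coeff f V = V f from rfl, h e f hef hq]


def Fc : MvPowerSeries (Fin 3) ℚ := fun d => (ccnt (d 0) (d 1) (d 2) : ℚ)

theorem main :
    ((1 - (X 0 : MvPowerSeries (Fin 3) ℚ) ^ 2) * (1 - X 0 * X 2)
        - X 1 * (X 0 : MvPowerSeries (Fin 3) ℚ) ^ 2 * (1 + X 0 * X 2)) * Fc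
      = (1 - (X 0 : MvPowerSeries (Fin 3) ℚ) ^ 2) * (1 - X 0 * X 2) := by
  set P : MvPowerSeries (Fin 3) ℚ :=
    (1 - (X 0 : MvPowerSeries (Fin 3) ℚ) ^ 2) * (1 - X 0 * X 2)
      - X 1 * (X 0 : MvPowerSeries (Fin 3) ℚ) ^ 2 * (1 + X 0 * X 2) with hPdef
  have hG : (X 0 : MvPowerSeries (Fin 3) ℚ) ^ 2 * (1 + X 0 * X 2) = M3 2 0 0 + M3 3 0 1 := by
    have h1 : M3 2 0 0 * M3 1 0 1 = M3 3 0 1 := M3_mul 2 0 0 1 0 1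
    calc (X 0 : MvPowerSeries (Fin 3) ℚ) ^ 2 * (1 + X 0 * X 2)
        = X 0 ^ 2 + X 0 ^2 * (X 0 * X 2) := by ring
      _ = M3 2 0 0 + M3 2 0 0 * M3 1 0 1 := by rw [X0_sq, X0X2]
      _ = M3 2 0 0 + M3 3 0 1 := by rw [h1]
  have hP : P = DdenS - X 1 * (DdenS * Wser) := by
    rw [hPdef, key3, show (1 - (X 0 : MvPowerSeries (Fin 3) ℚ) ^ 2) * (1 - X 0 * X 2)
        - X 1 * (X 0 : MvPowerSeries (Fin 3) ℚ) ^ 2 * (1 + X 0 * X 2)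
      = (1 - (X 0 : MvPowerSeries (Fin 3) ℚ) ^ 2) * (1 - X 0 * X 2)
        - X 1 * ((X 0 : MvPowerSeries (Fin 3) ℚ) ^ 2 * (1 + X 0 * X 2)) from by ring, hG, DdenS]
  have hP3 : P = 1 - M3 2 0 0 - M3 1 0 1 + M3 3 0 1 - M3 2 1 0 - M3 3 1 1 := by
    have h2 : X 1 * (M3 2 0 0 + M3 3 0 1) = M3 2 1 0 + M3 3 1 1 := by
      rw [X1_eq, mul_add, M3_mul, M3_mul]
    rw [hP, key3, h2, DdenS_eq]
    ring
  have hPsup : ∀ e : Fin 3 →₀ ℕ, coeff e P ≠ 0 → e 1 = 0 ∨ e 1 = 1 := by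
    intro e hne
    by_contra hcon
    push_neg at hcon
    apply hne
    rw [hP3, one_eq_M3]
    simp only [map_sub, map_add, coeff_M3]
    split_ifs <;> first | (exfalso; omega) | ring
  have hFc : ∀ f : Fin 3 →₀ ℕ, Fc f = (ccnt (f 0) (f 1) (f 2) : ℚ) := fun _ => rfl
  have hDden : DdenS = (1 - (X 0 : MvPowerSeries (Fin 3) ℚ) ^ 2) * (1 - X 0 * X 2) := rfl
  rw [← hDden]
  apply MvPowerSeries.ext
  intro d
  by_cases hd1 : d 1 = 0
  · have hcong : coeff d (P * Fc) = coeff d (P * Cser 0) := by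
      apply coeff_mul_congr
      intro e f hef hne
      have hsum : e 1 + f 1 = d 1 := by rw [← hef]; rfl
      have hf1 : f 1 = 0 := by omega
      rw [hFc, hf1, Cser, if_pos hf1]
    rw [hcong, Cser_zero, mul_one]
    have hP4 : P = DdenS - M3 2 1 0 - M3 3 1 1 := by
      rw [hP3, DdenS_eq]
    rw [hP4, map_sub, map_sub, coeff_M3, coeff_M3, if_neg (by omega), if_neg (by omega)]
    ring
  · obtain ⟨j, hj⟩ : ∃ j, d 1 = j + 1 := ⟨d 1 - 1, by omega⟩
    have hcong : coeff d (P * Fc) = coeff d (P * (Cser (j+1) + Cser j)) := by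
      apply coeff_mul_congr
      intro e f hef hne
      have hsum : e 1 + f 1 = d 1 := by rw [← hef]; rfl
      have he := hPsup e hne
      have hVf : (Cser (j+1) + Cser j) f = Cser (j+1) f + Cser j f := rfl
      rcases he with he | he
      · have hf1 : f 1 = j + 1 := by omega
        rw [hFc, hf1, hVf, Cser, Cser, if_pos hf1, if_neg (show ¬f 1 = j by omega), add_zero]
      · have hf1 : f 1 = j := by omega
        rw [hFc, hf1, hVf, Cser, Cser, if_neg (show ¬f 1 = j + 1 by omega), if_pos hf1, zero_add]
    have halg : P * (Cser (j+1) + Cser j) = DdenS * Cser j - DdenS * Cser (j+2) := by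
      rw [hP]
      linear_combination DdenS * (Cser_succ j) + DdenS * (Cser_succ (j+1))
    rw [hcong, halg, map_sub,
      slice_mul DdenS_support (Cser_support j) d (by omega),
      slice_mul DdenS_support (Cser_support (j+2)) d (by omega),
      DdenS_support d (by omega)]
    ring

lemma posSimplexPairCount_eq_cnt (n₁ n₂ r s : ℕ) :
    posSimplexPairCount n₁ n₂ r s = cnt n₁ n₂ r s := rfl

lemma FposSimplex_eq_Fc : FposSimplex = Fc := by
  funext d
  show (∑ pq ∈ Finset.HasAntidiagonal.antidiagonal (d 0),
    (posSimplexPairCount pq.1 pq.2 (d 1) (d 2) : ℚ)) = ((ccnt (d 0) (d 1) (d 2) : ℕ) : ℚ)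
  rw [ccnt, Nat.cast_sum]
  exact Finset.sum_congr rfl fun pq _ => by rw [posSimplexPairCount_eq_cnt]

end

end AuxSimplexGF

/-- `[(1−x²)(1−xz) − y·x²·(1+xz)]·F⁺ = (1−x²)(1−xz)` as formal power series. -/
theorem stmt10 :
    ((1 - Xv ^ 2) * (1 - Xv * Zv) - Yv * Xv ^ 2 * (1 + Xv * Zv)) * FposSimplex
      = (1 - Xv ^ 2) * (1 - Xv * Zv) := by
  rw [FposSimplex_eq_Fc]
  exact main
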